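/- Suppose condition (I¹_ρ) holds for some ρ > 0: there exists a finite positive Borel measure dA^ρ on [0,1], with α^ρ[u] := ∫₀¹ u(t) dA^ρ(t) and 𝒦^ρ(s) := ∫₀¹ k(t,s) dA^ρ(t), such that α^ρ[γ] < 1, H[u] ≤ α^ρ[u] for every u ∈ K with ‖u‖ = ρ, and f^{−ρ,ρ} · sup_{t∈[0,1]} { |γ(t)|/(1−α^ρ[γ]) · ∫₀¹ 𝒦^ρ(s) g(s) ds + ∫₀¹ |k(t,s)| g(s) ds } < 1, where f^{−ρ,ρ} := ess sup { f(t,u)/ρ : t ∈ [0,1], −ρ ≤ u ≤ ρ }. Then for every u ∈ K with ‖u‖ = ρ and every real μ ≥ 1 one has μ·u ≠ Tu. -/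

import Mathlib

open MeasureTheory Set

/-- Supremum norm of `u` on `[0,1]`. -/
noncomputable def nrm (u : ℝ → ℝ) : ℝ := sSup ((fun t => |u t|) '' Icc (0:ℝ) 1)

/-- Minimum (infimum) of `u` on `[a,b]`. -/
noncomputable def minOnIcc (u : ℝ → ℝ) (a b : ℝ) : ℝ := sInf (u '' Icc a b)

/-- The perturbed Hammerstein operator `Tu(t) = γ(t)H[u] + ∫₀¹ k(t,s)g(s)f(s,u(s)) ds`. -/
noncomputable def Tham (k : ℝ → ℝ → ℝ) (g : ℝ → ℝ) (f : ℝ → ℝ → ℝ) (γ : ℝ → ℝ)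
    (H : (ℝ → ℝ) → ℝ) (u : ℝ → ℝ) (t : ℝ) : ℝ :=
  γ t * H u + ∫ s in (0:ℝ)..1, k t s * g s * f s (u s)

/-- Condition (I¹_ρ) for sign-changing kernels (with `f^{-ρ,ρ}`). -/
def CondI1C (k : ℝ → ℝ → ℝ) (g : ℝ → ℝ) (f : ℝ → ℝ → ℝ) (γ : ℝ → ℝ)
    (H : (ℝ → ℝ) → ℝ) (K : Set (ℝ → ℝ)) (ρ : ℝ) : Prop :=
  ∃ μA : Measure ℝ, IsFiniteMeasure μA ∧ μA ((Icc (0:ℝ) 1)ᶜ) = 0 ∧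
    (∫ t, γ t ∂μA) < 1 ∧
    (∀ u ∈ K, nrm u = ρ → H u ≤ ∫ t, u t ∂μA) ∧
    ∃ fb : ℝ,
      (∀ᵐ t ∂(volume.restrict (Icc (0:ℝ) 1)), ∀ u : ℝ, -ρ ≤ u → u ≤ ρ → f t u ≤ fb * ρ) ∧
      fb * sSup ((fun t => |γ t| / (1 - ∫ t', γ t' ∂μA) *
          (∫ s in (0:ℝ)..1, (∫ t', k t' s ∂μA) * g s) +
          ∫ s in (0:ℝ)..1, |k t s| * g s) '' Icc (0:ℝ) 1) < 1

section AuxStmt5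
open Filter

private lemma bnd3 {x Φs gs Fs M : ℝ} (h1 : |x| ≤ Φs) (h2 : 0 ≤ gs) (h3 : Fs ≤ M)
    (h4 : 0 ≤ Φs) (h5 : 0 ≤ Fs) : |x| * (gs * Fs) ≤ gs * Φs * M := by
  nlinarith [mul_le_mul_of_nonneg_right h1 (mul_nonneg h2 h5),
    mul_le_mul_of_nonneg_left h3 (mul_nonneg h4 h2)]

private lemma aeswap {A ν : Measure ℝ} [IsFiniteMeasure A] [SFinite ν]
    {p : ℝ → ℝ → Prop} (hp : MeasurableSet {q : ℝ × ℝ | p q.1 q.2})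
    {S : Set ℝ} (hA : A Sᶜ = 0)
    (h : ∀ t ∈ S, ∀ᵐ s ∂ν, p t s) :
    (∀ᵐ q ∂(A.prod ν), p q.1 q.2) ∧ (∀ᵐ s ∂ν, ∀ᵐ t ∂A, p t s) := by
  have hE : MeasurableSet {q : ℝ × ℝ | ¬ p q.1 q.2} := by
    have : {q : ℝ × ℝ | ¬ p q.1 q.2} = {q : ℝ × ℝ | p q.1 q.2}ᶜ := rfl
    rw [this]; exact hp.compl
  have hprod : (A.prod ν) {q : ℝ × ℝ | ¬ p q.1 q.2} = 0 := by
    rw [Measure.measure_prod_null hE]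
    have hS : ∀ᵐ t ∂A, t ∈ S := by
      rw [ae_iff]
      simpa [Set.compl_def] using hA
    filter_upwards [hS] with t ht
    have h2 := h t ht
    rw [ae_iff] at h2
    simpa [Set.preimage] using h2
  constructor
  · rw [ae_iff]; exact hprod
  · have hsm : MeasurableSet {q : ℝ × ℝ | ¬ p q.2 q.1} := by
      have : {q : ℝ × ℝ | ¬ p q.2 q.1} = Prod.swap ⁻¹' {q : ℝ × ℝ | ¬ p q.1 q.2} := rfl
      rw [this]; exact measurable_swap hE
    have hswap : (ν.prod A) {q : ℝ × ℝ | ¬ p q.2 q.1} = 0 := by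
      rw [← Measure.prod_swap, Measure.map_apply measurable_swap hsm]
      exact hprod
    have : ∀ᵐ q ∂(ν.prod A), p q.2 q.1 := by rw [ae_iff]; exact hswap
    exact Measure.ae_ae_of_ae_prod this

private lemma massBound {A : Measure ℝ} [IsFiniteMeasure A] {a b c ρ : ℝ}
    (ha : 0 ≤ a) (hab : a ≤ b) (hb : b ≤ 1) (hρ : 0 < ρ) (hc0 : 0 < c) (hc1 : c ≤ 1)
    (hA_res : A.restrict (Icc (0:ℝ) 1) = A)
    (hpos : ∀ w : ℝ → ℝ, Continuous w → nrm w = ρ → c * nrm w ≤ minOnIcc w a b →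
      0 ≤ ∫ t, w t ∂A) :
    (A (Icc (0:ℝ) 1 \ Icc a b)).toReal ≤ c * (A (Icc a b)).toReal := by
  have hne_ab : (Icc a b).Nonempty := nonempty_Icc.2 hab
  set B : ℕ → Set ℝ := fun n => {t | Metric.infDist t (Icc a b) < 1/((n:ℝ)+1)} with hB
  set D : ℕ → Set ℝ := fun n => Icc (0:ℝ) 1 \ B n with hD
  set C : ℕ → Set ℝ := fun n => Icc (0:ℝ) 1 ∩ B n with hC
  have hBopen : ∀ n, IsOpen (B n) :=
    fun n => isOpen_lt (Metric.continuous_infDist_pt _) continuous_const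
  have hDmeas : ∀ n, MeasurableSet (D n) :=
    fun n => measurableSet_Icc.diff (hBopen n).measurableSet
  have hCmeas : ∀ n, MeasurableSet (C n) :=
    fun n => measurableSet_Icc.inter (hBopen n).measurableSet
  have key : ∀ n : ℕ, (A (D n)).toReal ≤ c * (A (C n)).toReal := by
    intro n
    by_cases hex : ∃ t₀ ∈ Icc (0:ℝ) 1, 1/((n:ℝ)+1) ≤ Metric.infDist t₀ (Icc a b)
    · obtain ⟨t₀, ht₀, ht₀d⟩ := hex
      set w : ℝ → ℝ :=
        fun t => ρ * (c - (1+c) * min 1 (((n:ℝ)+1) * Metric.infDist t (Icc a b))) with hw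
      have hd_nn : ∀ t, 0 ≤ Metric.infDist t (Icc a b) := fun t => Metric.infDist_nonneg
      have hm_mem : ∀ t, 0 ≤ min 1 (((n:ℝ)+1) * Metric.infDist t (Icc a b)) ∧
          min 1 (((n:ℝ)+1) * Metric.infDist t (Icc a b)) ≤ 1 := by
        intro t
        constructor
        · exact le_min one_pos.le (mul_nonneg (by positivity) (hd_nn t))
        · exact min_le_left _ _
      have hw_ub : ∀ t, w t ≤ c * ρ := by
        intro t
        obtain ⟨h1, h2⟩ := hm_mem t
        show ρ * (c - (1+c) * min 1 (((n:ℝ)+1) * Metric.infDist t (Icc a b))) ≤ c * ρ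
        nlinarith [mul_nonneg (mul_nonneg (by linarith : (0:ℝ) ≤ 1 + c) h1) hρ.le]
      have hw_lb : ∀ t, -ρ ≤ w t := by
        intro t
        obtain ⟨h1, h2⟩ := hm_mem t
        show -ρ ≤ ρ * (c - (1+c) * min 1 (((n:ℝ)+1) * Metric.infDist t (Icc a b)))
        nlinarith [mul_nonneg (mul_nonneg (by linarith : (0:ℝ) ≤ 1 + c)
          (by linarith : (0:ℝ) ≤ 1 - min 1 (((n:ℝ)+1) * Metric.infDist t (Icc a b)))) hρ.le]
      have hw_abs : ∀ t, |w t| ≤ ρ := by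
        intro t
        rw [abs_le]
        refine ⟨hw_lb t, (hw_ub t).trans ?_⟩
        nlinarith [mul_le_mul_of_nonneg_right hc1 hρ.le]
      have hw_cont : Continuous w := by
        apply continuous_const.mul
        apply continuous_const.sub
        apply continuous_const.mul
        exact continuous_const.min (continuous_const.mul (Metric.continuous_infDist_pt _))
      have hw_ab : ∀ t ∈ Icc a b, w t = c * ρ := by
        intro t ht
        rw [hw]
        simp [Metric.infDist_zero_of_mem ht]
        ring
      have hw_far : ∀ t, 1/((n:ℝ)+1) ≤ Metric.infDist t (Icc a b) → w t = -ρ := by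
        intro t htd
        have hn1 : (0:ℝ) < (n:ℝ)+1 := by positivity
        have : (1:ℝ) ≤ ((n:ℝ)+1) * Metric.infDist t (Icc a b) := by
          rw [div_le_iff₀ hn1] at htd
          nlinarith
        show ρ * (c - (1+c) * min 1 (((n:ℝ)+1) * Metric.infDist t (Icc a b))) = -ρ
        rw [min_eq_left this]
        ring
      have hwt₀ : w t₀ = -ρ := hw_far t₀ ht₀d
      have hbdd : BddAbove ((fun t => |w t|) '' Icc (0:ℝ) 1) := by
        refine ⟨ρ, ?_⟩
        rintro x ⟨t, _, rfl⟩
        exact hw_abs t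
      have hwnrm : nrm w = ρ := by
        apply le_antisymm
        · refine csSup_le ⟨|w t₀|, ⟨t₀, ht₀, rfl⟩⟩ ?_
          rintro x ⟨t, _, rfl⟩
          exact hw_abs t
        · have : |w t₀| = ρ := by rw [hwt₀, abs_neg, abs_of_pos hρ]
          rw [← this]
          exact le_csSup hbdd ⟨t₀, ht₀, rfl⟩
      have hwmin : minOnIcc w a b = c * ρ := by
        have himg : w '' Icc a b = {c * ρ} := by
          rw [Set.eq_singleton_iff_nonempty_unique_mem]
          refine ⟨hne_ab.image w, ?_⟩
          rintro x ⟨t, ht, rfl⟩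
          exact hw_ab t ht
        rw [minOnIcc, himg, csInf_singleton]
      have h0 : 0 ≤ ∫ t, w t ∂A := by
        apply hpos w hw_cont hwnrm
        rw [hwnrm, hwmin]
      have hw_int : Integrable w A := by
        apply Integrable.mono' (integrable_const ρ) hw_cont.aestronglyMeasurable
        exact Eventually.of_forall fun t => by simpa using hw_abs t
      have hdisj : Disjoint (C n) (D n) := by
        rw [Set.disjoint_left]
        rintro t ⟨-, htB⟩ ⟨-, htnB⟩
        exact htnB htB
      have hsplit : ∫ t in Icc (0:ℝ) 1, w t ∂A
          = ∫ t in C n, w t ∂A + ∫ t in D n, w t ∂A := by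
        have := setIntegral_union hdisj (hDmeas n) hw_int.integrableOn hw_int.integrableOn
          (f := w) (μ := A)
        rwa [Set.inter_union_diff] at this
      have h1 : ∫ t in C n, w t ∂A ≤ (A (C n)).toReal * (c * ρ) := by
        have := setIntegral_mono_on hw_int.integrableOn
          (integrable_const (c * ρ)).integrableOn
          (hCmeas n) (fun t _ => hw_ub t)
        rwa [setIntegral_const, smul_eq_mul] at this
      have h2 : ∫ t in D n, w t ∂A = (A (D n)).toReal * (-ρ) := by
        rw [setIntegral_congr_fun (hDmeas n) (fun t ht => hw_far t (not_lt.1 ht.2)),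
          setIntegral_const, smul_eq_mul, measureReal_def]
      have h3 : ∫ t, w t ∂A = ∫ t in Icc (0:ℝ) 1, w t ∂A := by rw [hA_res]
      rw [h3, hsplit, h2] at h0
      have hyx : (A (D n)).toReal * ρ ≤ (c * (A (C n)).toReal) * ρ := by nlinarith [h0, h1]
      exact le_of_mul_le_mul_right hyx hρ
    · push_neg at hex
      have hDe : D n = ∅ := by
        rw [Set.eq_empty_iff_forall_notMem]
        rintro t ⟨htI, htB⟩
        exact htB (hex t htI)
      rw [hDe]
      simp
      positivity
  have hDmono : Monotone D := by
    intro m n hmn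
    apply Set.diff_subset_diff_right
    intro t ht
    calc Metric.infDist t (Icc a b) < 1/((n:ℝ)+1) := ht
    _ ≤ 1/((m:ℝ)+1) := by
        apply one_div_le_one_div_of_le (by positivity)
        have : (m:ℝ) ≤ n := Nat.cast_le.2 hmn
        linarith
  have hCanti : Antitone C := by
    intro m n hmn
    apply Set.inter_subset_inter_right
    intro t ht
    calc Metric.infDist t (Icc a b) < 1/((n:ℝ)+1) := ht
    _ ≤ 1/((m:ℝ)+1) := by
        apply one_div_le_one_div_of_le (by positivity)
        have : (m:ℝ) ≤ n := Nat.cast_le.2 hmn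
        linarith
  have hDU : ⋃ n, D n = Icc (0:ℝ) 1 \ Icc a b := by
    ext t
    simp only [mem_iUnion, hD, hB, mem_diff, mem_setOf_eq]
    constructor
    · rintro ⟨n, htI, hd⟩
      refine ⟨htI, fun hmem => hd ?_⟩
      rw [Metric.infDist_zero_of_mem hmem]
      positivity
    · rintro ⟨htI, hnot⟩
      have hd0 : 0 < Metric.infDist t (Icc a b) :=
        (isClosed_Icc.notMem_iff_infDist_pos hne_ab).1 hnot
      obtain ⟨n, hn⟩ := exists_nat_one_div_lt hd0
      exact ⟨n, htI, not_lt.2 hn.le⟩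
  have hCI : ⋂ n, C n = Icc a b := by
    ext t
    simp only [mem_iInter, hC, hB, mem_inter_iff, mem_setOf_eq]
    constructor
    · intro h
      have hd : Metric.infDist t (Icc a b) ≤ 0 := by
        by_contra hpos
        push_neg at hpos
        obtain ⟨n, hn⟩ := exists_nat_one_div_lt hpos
        exact absurd (h n).2 (not_lt.2 hn.le)
      by_contra hmem
      have := (isClosed_Icc.notMem_iff_infDist_pos hne_ab).1 hmem
      linarith
    · intro h n
      refine ⟨Icc_subset_Icc ha hb h, ?_⟩
      rw [Metric.infDist_zero_of_mem h]
      positivity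
  have hDlim : Tendsto (fun n => (A (D n)).toReal) atTop
      (nhds ((A (Icc (0:ℝ) 1 \ Icc a b)).toReal)) := by
    have h1 := tendsto_measure_iUnion_atTop (μ := A) hDmono
    rw [hDU] at h1
    exact (ENNReal.tendsto_toReal (measure_ne_top A _)).comp h1
  have hClim : Tendsto (fun n => (A (C n)).toReal) atTop
      (nhds ((A (Icc a b)).toReal)) := by
    have h1 := tendsto_measure_iInter_atTop
      (fun n => (hCmeas n).nullMeasurableSet) hCanti ⟨0, measure_ne_top A _⟩
    rw [hCI] at h1
    exact (ENNReal.tendsto_toReal (measure_ne_top A _)).comp h1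
  exact le_of_tendsto_of_tendsto' hDlim (hClim.const_mul c) key

end AuxStmt5

set_option maxHeartbeats 1000000 in
theorem stmt5
    (k : ℝ → ℝ → ℝ) (g : ℝ → ℝ) (f : ℝ → ℝ → ℝ) (Φ γ : ℝ → ℝ) (a b c₁ c₂ c : ℝ)
    (H : (ℝ → ℝ) → ℝ) (K : Set (ℝ → ℝ))
    (hk_meas : Measurable (Function.uncurry k))
    (hk_cont : ∀ τ ∈ Icc (0:ℝ) 1, ∀ᵐ s ∂(volume.restrict (Icc (0:ℝ) 1)),
      Filter.Tendsto (fun t => |k t s - k τ s|) (nhdsWithin τ (Icc (0:ℝ) 1)) (nhds 0))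
    (ha : 0 ≤ a) (hab : a ≤ b) (hb : b ≤ 1)
    (hΦ_meas : Measurable Φ)
    (hΦ_bdd : ∃ C, ∀ᵐ s ∂(volume.restrict (Icc (0:ℝ) 1)), |Φ s| ≤ C)
    (hc₁ : c₁ ∈ Ioc (0:ℝ) 1)
    (hkΦ_abs : ∀ t ∈ Icc (0:ℝ) 1, ∀ᵐ s ∂(volume.restrict (Icc (0:ℝ) 1)), |k t s| ≤ Φ s)
    (hkΦ_low : ∀ t ∈ Icc a b, ∀ᵐ s ∂(volume.restrict (Icc (0:ℝ) 1)), c₁ * Φ s ≤ k t s)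
    (hg_meas : Measurable g)
    (hg_nonneg : ∀ᵐ s ∂(volume.restrict (Icc (0:ℝ) 1)), 0 ≤ g s)
    (hgΦ_int : IntegrableOn (fun s => g s * Φ s) (Icc (0:ℝ) 1))
    (hΦg_pos : 0 < ∫ s in a..b, Φ s * g s)
    (hf_meas : ∀ u : ℝ, Measurable (fun t => f t u))
    (hf_cont : ∀ᵐ t ∂(volume.restrict (Icc (0:ℝ) 1)), Continuous (f t))
    (hf_nonneg : ∀ t u : ℝ, 0 ≤ f t u)
    (hf_bdd : ∀ r > 0, ∃ C, ∀ᵐ t ∂(volume.restrict (Icc (0:ℝ) 1)), ∀ u ∈ Icc (-r) r, f t u ≤ C)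
    (hγ_cont : ContinuousOn γ (Icc (0:ℝ) 1))
    (hc₂ : c₂ ∈ Ioc (0:ℝ) 1)
    (hγ_low : ∀ t ∈ Icc a b, c₂ * nrm γ ≤ γ t)
    (hc : c = min c₁ c₂)
    (hK : K = {u : ℝ → ℝ | ContinuousOn u (Icc (0:ℝ) 1) ∧ c * nrm u ≤ minOnIcc u a b})
    (hH_nonneg : ∀ u ∈ K, 0 ≤ H u)
    (hH_cont : ∀ u ∈ K, ∀ ε > 0, ∃ δ > 0, ∀ v ∈ K,
      nrm (fun t => u t - v t) < δ → |H u - H v| < ε)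
    (hH_bdd : ∀ M : ℝ, ∃ M', ∀ u ∈ K, nrm u ≤ M → H u ≤ M')
    (ρ : ℝ) (hρ : 0 < ρ) (hI1 : CondI1C k g f γ H K ρ) :
    ∀ u ∈ K, nrm u = ρ → ∀ μ : ℝ, 1 ≤ μ →
      ¬ (∀ t ∈ Icc (0:ℝ) 1, μ * u t = Tham k g f γ H u t) := by
  classical
  intro u huK hnrm μ hμ hfix
  obtain ⟨A, hAfin, hAcompl, hαγ, hHα, fb, hfb, hmain⟩ := hI1
  haveI := hAfin
  -- basic constants
  have hcpos : 0 < c := by rw [hc]; exact lt_min hc₁.1 hc₂.1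
  have hcc₁ : c ≤ c₁ := by rw [hc]; exact min_le_left _ _
  have hcle1 : c ≤ 1 := hcc₁.trans hc₁.2
  have hA_res : A.restrict (Icc (0:ℝ) 1) = A := by
    apply Measure.restrict_eq_self_of_ae_mem
    rw [ae_iff]
    simpa [Set.compl_def] using hAcompl
  have hAmem : ∀ᵐ t ∂A, t ∈ Icc (0:ℝ) 1 := by
    rw [ae_iff]
    simpa [Set.compl_def] using hAcompl
  set ν := volume.restrict (Icc (0:ℝ) 1) with hνdef
  haveI : IsFiniteMeasure ν := by
    constructor
    rw [hνdef, Measure.restrict_apply_univ, Real.volume_Icc]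
    simp
  have hii : ∀ h : ℝ → ℝ, (∫ s in (0:ℝ)..1, h s) = ∫ s, h s ∂ν := by
    intro h
    rw [intervalIntegral.integral_of_le zero_le_one,
      Measure.restrict_congr_set Ioc_ae_eq_Icc]
  -- u facts
  have hu' : ContinuousOn u (Icc (0:ℝ) 1) ∧ c * nrm u ≤ minOnIcc u a b := by
    rw [hK] at huK; exact huK
  have hu_cont := hu'.1
  have hbddu : BddAbove ((fun t => |u t|) '' Icc (0:ℝ) 1) :=
    isCompact_Icc.bddAbove_image hu_cont.abs
  have hu_bdd : ∀ t ∈ Icc (0:ℝ) 1, |u t| ≤ ρ := by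
    intro t ht
    rw [← hnrm]
    exact le_csSup hbddu ⟨t, ht, rfl⟩
  have himg_ne : ((fun t => |u t|) '' Icc (0:ℝ) 1).Nonempty :=
    ⟨|u 0|, ⟨0, ⟨le_refl 0, zero_le_one⟩, rfl⟩⟩
  -- fb nonneg
  have hν_ne : ν ≠ 0 := by
    intro h0
    have h1 : ν univ = 0 := by rw [h0]; simp
    rw [hνdef, Measure.restrict_apply_univ, Real.volume_Icc] at h1
    simp at h1
  haveI : (ae ν).NeBot := ae_neBot.2 hν_ne
  have hfb0 : 0 ≤ fb := by
    obtain ⟨t, ht⟩ := hfb.exists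
    have h1 := ht 0 (by linarith) hρ.le
    have h2 := hf_nonneg t 0
    nlinarith
  have hΦ0 : ∀ᵐ s ∂ν, 0 ≤ Φ s := by
    filter_upwards [hkΦ_abs 0 ⟨le_refl 0, zero_le_one⟩] with s hs
    exact (abs_nonneg _).trans hs
  -- F
  set F : ℝ → ℝ := fun s => f s (u s) with hFdef
  have hF_nn : ∀ s, 0 ≤ F s := fun s => hf_nonneg s (u s)
  have hFb : ∀ᵐ s ∂ν, F s ≤ fb * ρ := by
    filter_upwards [hfb, ae_restrict_mem measurableSet_Icc] with s hs hsmem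
    have h1 := hu_bdd s hsmem
    rw [abs_le] at h1
    exact hs (u s) h1.1 h1.2
  have hu_aem : AEMeasurable u ν := hu_cont.aemeasurable measurableSet_Icc
  have hF_aesm : AEStronglyMeasurable F ν := by
    obtain ⟨N, hNmeas, hNnull, hNc⟩ :
        ∃ N, MeasurableSet N ∧ ν N = 0 ∧ ∀ t ∉ N, Continuous (f t) := by
      refine ⟨toMeasurable ν {t | ¬ Continuous (f t)}, measurableSet_toMeasurable _ _, ?_, ?_⟩
      · rw [measure_toMeasurable]
        exact ae_iff.1 hf_cont
      · intro t ht
        by_contra hcon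
        exact ht (subset_toMeasurable _ _ hcon)
    set f' : ℝ → ℝ → ℝ := fun t v => if t ∈ N then 0 else f t v with hf'def
    have hf'c : ∀ t, Continuous (f' t) := by
      intro t
      by_cases h : t ∈ N
      · simp only [hf'def, h, if_true]
        exact continuous_const
      · simp only [hf'def, h, if_false]
        exact hNc t h
    have hf'm : ∀ v, Measurable fun t => f' t v := by
      intro v
      simp only [hf'def]
      exact Measurable.ite hNmeas measurable_const (hf_meas v)
    have hunc : Measurable (Function.uncurry fun v t => f' t v) :=
      measurable_uncurry_of_continuous_of_measurable (fun t => hf'c t) hf'm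
    have hpair : AEMeasurable (fun s => (u s, s)) ν := hu_aem.prodMk aemeasurable_id
    have hcomp : AEMeasurable (fun s => f' s (u s)) ν := hunc.comp_aemeasurable hpair
    have hae : (fun s => f' s (u s)) =ᵐ[ν] F := by
      have hN' : ∀ᵐ s ∂ν, s ∉ N := by
        rw [ae_iff]
        simpa using hNnull
      filter_upwards [hN'] with s hs
      simp [hf'def, hs, hFdef]
    exact hcomp.aestronglyMeasurable.congr hae
  -- kernel integral 𝒦
  set 𝒦 : ℝ → ℝ := fun s => ∫ t', k t' s ∂A with h𝒦def
  have h𝒦_sm : StronglyMeasurable 𝒦 := by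
    have h1 := (hk_meas.stronglyMeasurable).integral_prod_left' (μ := A)
    exact h1
  -- section swaps
  have hset₁ : MeasurableSet {q : ℝ × ℝ | |k q.1 q.2| ≤ Φ q.2} :=
    measurableSet_le hk_meas.abs (hΦ_meas.comp measurable_snd)
  obtain ⟨hprod₁, hsae₁⟩ := aeswap (A := A) (ν := ν)
    (p := fun t s => |k t s| ≤ Φ s) hset₁ hAcompl hkΦ_abs
  have hAae₁ : ∀ᵐ t ∂A, ∀ᵐ s ∂ν, |k t s| ≤ Φ s := Measure.ae_ae_of_ae_prod hprod₁
  have hset₂ : MeasurableSet {q : ℝ × ℝ | q.1 ∈ Icc a b → c₁ * Φ q.2 ≤ k q.1 q.2} := by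
    have he : {q : ℝ × ℝ | q.1 ∈ Icc a b → c₁ * Φ q.2 ≤ k q.1 q.2}
        = {q : ℝ × ℝ | q.1 ∈ Icc a b}ᶜ ∪ {q : ℝ × ℝ | c₁ * Φ q.2 ≤ k q.1 q.2} := by
      ext q; simp [imp_iff_not_or]
    rw [he]
    exact (measurable_fst measurableSet_Icc).compl.union
      (measurableSet_le ((hΦ_meas.comp measurable_snd).const_mul c₁) hk_meas)
  have hlow' : ∀ t ∈ Icc (0:ℝ) 1, ∀ᵐ s ∂ν, (t ∈ Icc a b → c₁ * Φ s ≤ k t s) := by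
    intro t _
    by_cases htab : t ∈ Icc a b
    · filter_upwards [hkΦ_low t htab] with s hs
      exact fun _ => hs
    · exact Filter.Eventually.of_forall fun s hmem => absurd hmem htab
  obtain ⟨hprod₂, hsae₂⟩ := aeswap (A := A) (ν := ν)
    (p := fun t s => t ∈ Icc a b → c₁ * Φ s ≤ k t s) hset₂ hAcompl hlow'
  -- mass bound
  have hAout : (A (Icc (0:ℝ) 1 \ Icc a b)).toReal ≤ c * (A (Icc a b)).toReal := by
    apply massBound ha hab hb hρ hcpos hcle1 hA_res
    intro w hw_cont hw_nrm hw_min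
    have hwK : w ∈ K := by rw [hK]; exact ⟨hw_cont.continuousOn, hw_min⟩
    exact le_trans (hH_nonneg w hwK) (hHα w hwK hw_nrm)
  -- 𝒦 nonneg and bounded a.e.
  have h𝒦props : ∀ᵐ s ∂ν, 0 ≤ 𝒦 s ∧ |𝒦 s| ≤ Φ s * (A univ).toReal := by
    filter_upwards [hsae₁, hsae₂, hΦ0] with s h1 h2 hφ
    have hks_m : Measurable fun t => k t s :=
      hk_meas.comp (measurable_id.prodMk measurable_const)
    have hks_int : Integrable (fun t => k t s) A := by
      apply Integrable.mono' (integrable_const (Φ s)) hks_m.aestronglyMeasurable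
      filter_upwards [h1] with t ht
      simpa using ht
    constructor
    · have hsub : Icc a b ⊆ Icc (0:ℝ) 1 := Icc_subset_Icc ha hb
      have hde : Icc a b ∪ (Icc (0:ℝ) 1 \ Icc a b) = Icc (0:ℝ) 1 :=
        Set.union_diff_cancel hsub
      have hdisj : Disjoint (Icc a b) (Icc (0:ℝ) 1 \ Icc a b) := disjoint_sdiff_self_right
      have hsplit : 𝒦 s = ∫ t in Icc a b, k t s ∂A
          + ∫ t in Icc (0:ℝ) 1 \ Icc a b, k t s ∂A := by
        rw [← setIntegral_union hdisj (measurableSet_Icc.diff measurableSet_Icc)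
          hks_int.integrableOn hks_int.integrableOn, hde]
        simp only [h𝒦def]
        conv_lhs => rw [← hA_res]
      have hlow : c₁ * Φ s * (A (Icc a b)).toReal ≤ ∫ t in Icc a b, k t s ∂A := by
        have h3 : ∫ t in Icc a b, (c₁ * Φ s) ∂A ≤ ∫ t in Icc a b, k t s ∂A := by
          apply setIntegral_mono_ae_restrict (integrable_const _).integrableOn
            hks_int.integrableOn
          filter_upwards [ae_restrict_of_ae h2, ae_restrict_mem measurableSet_Icc]
            with t h2t hmem
          exact h2t hmem
        rw [setIntegral_const, smul_eq_mul] at h3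
        calc c₁ * Φ s * (A (Icc a b)).toReal
            = (A (Icc a b)).toReal * (c₁ * Φ s) := by ring
        _ ≤ _ := h3
      have hout : -(Φ s) * (A (Icc (0:ℝ) 1 \ Icc a b)).toReal
          ≤ ∫ t in Icc (0:ℝ) 1 \ Icc a b, k t s ∂A := by
        have h3 : ∫ t in Icc (0:ℝ) 1 \ Icc a b, (-(Φ s)) ∂A
            ≤ ∫ t in Icc (0:ℝ) 1 \ Icc a b, k t s ∂A := by
          apply setIntegral_mono_ae_restrict (integrable_const _).integrableOn
            hks_int.integrableOn
          filter_upwards [ae_restrict_of_ae h1] with t h1t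
          have := abs_le.1 h1t
          linarith [this.1]
        rw [setIntegral_const, smul_eq_mul] at h3
        calc -(Φ s) * (A (Icc (0:ℝ) 1 \ Icc a b)).toReal
            = (A (Icc (0:ℝ) 1 \ Icc a b)).toReal * (-(Φ s)) := by ring
        _ ≤ _ := h3
      have hin0 : (0:ℝ) ≤ (A (Icc a b)).toReal := ENNReal.toReal_nonneg
      have hout0 : (0:ℝ) ≤ (A (Icc (0:ℝ) 1 \ Icc a b)).toReal := ENNReal.toReal_nonneg
      rw [hsplit]
      nlinarith [mul_le_mul_of_nonneg_left hAout hφ,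
        mul_nonneg (mul_nonneg (sub_nonneg.2 hcc₁) hφ) hin0]
    · have h4 : |𝒦 s| ≤ ∫ t, |k t s| ∂A := by
        simpa [Real.norm_eq_abs, h𝒦def] using
          norm_integral_le_integral_norm (μ := A) (fun t => k t s)
      have h5 : ∫ t, |k t s| ∂A ≤ ∫ _t, Φ s ∂A := by
        apply integral_mono_ae hks_int.abs (integrable_const _)
        exact h1
      rw [integral_const, smul_eq_mul, measureReal_def, mul_comm] at h5
      linarith
  -- Integrabilities wrt ν
  have hgΦν : Integrable (fun s => g s * Φ s) ν := hgΦ_int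
  have hM_int : Integrable (fun s => g s * Φ s * (fb * ρ)) ν := hgΦν.mul_const _
  have hkgF_int : ∀ t ∈ Icc (0:ℝ) 1, Integrable (fun s => k t s * (g s * F s)) ν := by
    intro t ht
    have hks_m : Measurable fun s => k t s :=
      hk_meas.comp (measurable_const.prodMk measurable_id)
    have haesm : AEStronglyMeasurable (fun s => k t s * (g s * F s)) ν := by
      exact hks_m.aestronglyMeasurable.mul (hg_meas.aestronglyMeasurable.mul hF_aesm)
    apply Integrable.mono' hM_int haesm
    filter_upwards [hkΦ_abs t ht, hg_nonneg, hFb, hΦ0] with s h1 h2 h3 h4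
    have h5 : ‖k t s * (g s * F s)‖ = |k t s| * (g s * F s) := by
      rw [Real.norm_eq_abs, abs_mul, abs_of_nonneg (mul_nonneg h2 (hF_nn s))]
    rw [h5]
    exact bnd3 h1 h2 h3 h4 (hF_nn s)
  have hkg_int : ∀ t ∈ Icc (0:ℝ) 1, Integrable (fun s => |k t s| * g s) ν := by
    intro t ht
    have hks_m : Measurable fun s => k t s :=
      hk_meas.comp (measurable_const.prodMk measurable_id)
    have haesm : AEStronglyMeasurable (fun s => |k t s| * g s) ν := by
      exact hks_m.abs.aestronglyMeasurable.mul hg_meas.aestronglyMeasurable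
    apply Integrable.mono' hgΦν haesm
    filter_upwards [hkΦ_abs t ht, hg_nonneg] with s h1 h2
    have h5 : ‖|k t s| * g s‖ = |k t s| * g s := by
      rw [Real.norm_eq_abs, abs_of_nonneg (mul_nonneg (abs_nonneg _) h2)]
    rw [h5]
    nlinarith [mul_le_mul_of_nonneg_right h1 h2]
  have h𝒦g_int : Integrable (fun s => 𝒦 s * g s) ν := by
    have haesm : AEStronglyMeasurable (fun s => 𝒦 s * g s) ν := by
      exact h𝒦_sm.measurable.aestronglyMeasurable.mul hg_meas.aestronglyMeasurable
    apply Integrable.mono' (hgΦν.mul_const ((A univ).toReal)) haesm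
    filter_upwards [h𝒦props, hg_nonneg] with s hs h2
    have h5 : ‖𝒦 s * g s‖ = |𝒦 s| * g s := by
      rw [Real.norm_eq_abs, abs_mul, abs_of_nonneg h2]
    rw [h5]
    nlinarith [mul_le_mul_of_nonneg_right hs.2 h2]
  have h𝒦gF_int : Integrable (fun s => 𝒦 s * (g s * F s)) ν := by
    have haesm : AEStronglyMeasurable (fun s => 𝒦 s * (g s * F s)) ν := by
      exact h𝒦_sm.measurable.aestronglyMeasurable.mul
        (hg_meas.aestronglyMeasurable.mul hF_aesm)
    apply Integrable.mono' (hgΦν.mul_const ((A univ).toReal * (fb * ρ))) haesm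
    filter_upwards [h𝒦props, hg_nonneg, hFb, hΦ0] with s hs h2 h3 h4
    have h5 : ‖𝒦 s * (g s * F s)‖ = |𝒦 s| * (g s * F s) := by
      rw [Real.norm_eq_abs, abs_mul, abs_of_nonneg (mul_nonneg h2 (hF_nn s))]
    rw [h5]
    have h6 : (0:ℝ) ≤ Φ s * (A univ).toReal :=
      mul_nonneg h4 ENNReal.toReal_nonneg
    nlinarith [bnd3 hs.2 h2 h3 h6 (hF_nn s)]
  -- product integrability and Fubini
  have haesm_prod : AEStronglyMeasurable
      (fun q : ℝ × ℝ => k q.1 q.2 * (g q.2 * F q.2)) (A.prod ν) := by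
    have h1 : AEStronglyMeasurable (fun q : ℝ × ℝ => F q.2) (A.prod ν) :=
      hF_aesm.comp_quasiMeasurePreserving Measure.quasiMeasurePreserving_snd
    exact hk_meas.aestronglyMeasurable.mul
      ((hg_meas.comp measurable_snd).aestronglyMeasurable.mul h1)
  have hprodInt : Integrable (fun q : ℝ × ℝ => k q.1 q.2 * (g q.2 * F q.2)) (A.prod ν) := by
    rw [integrable_prod_iff haesm_prod]
    constructor
    · filter_upwards [hAmem] with t ht
      exact hkgF_int t ht
    · apply Integrable.mono' (integrable_const (∫ s, (g s * Φ s * (fb * ρ)) ∂ν))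
        (haesm_prod.norm.integral_prod_right')
      filter_upwards [hAmem] with t ht
      rw [Real.norm_eq_abs, abs_of_nonneg (integral_nonneg fun s => norm_nonneg _)]
      apply integral_mono_ae (hkgF_int t ht).norm hM_int
      filter_upwards [hkΦ_abs t ht, hg_nonneg, hFb, hΦ0] with s h1 h2 h3 h4
      rw [Real.norm_eq_abs, abs_mul, abs_of_nonneg (mul_nonneg h2 (hF_nn s))]
      exact bnd3 h1 h2 h3 h4 (hF_nn s)
  have hswap : ∫ t, (∫ s, k t s * (g s * F s) ∂ν) ∂A
      = ∫ s, (∫ t, k t s * (g s * F s) ∂A) ∂ν :=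
    integral_integral_swap (f := fun t s => k t s * (g s * F s)) hprodInt
  -- integrated fixed point equation
  have hu_int : Integrable u A := by
    have h1 : AEMeasurable u (A.restrict (Icc (0:ℝ) 1)) :=
      hu_cont.aemeasurable measurableSet_Icc
    rw [hA_res] at h1
    apply Integrable.mono' (integrable_const ρ) h1.aestronglyMeasurable
    filter_upwards [hAmem] with t ht
    simpa using hu_bdd t ht
  obtain ⟨Mγ, hMγ⟩ := isCompact_Icc.exists_bound_of_continuousOn hγ_cont
  have hγ_int : Integrable γ A := by
    have h1 : AEMeasurable γ (A.restrict (Icc (0:ℝ) 1)) :=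
      hγ_cont.aemeasurable measurableSet_Icc
    rw [hA_res] at h1
    apply Integrable.mono' (integrable_const Mγ) h1.aestronglyMeasurable
    filter_upwards [hAmem] with t ht
    exact hMγ t ht
  have hinner_int : Integrable (fun t => ∫ s, k t s * (g s * F s) ∂ν) A :=
    hprodInt.integral_prod_left
  have hfix' : ∀ t ∈ Icc (0:ℝ) 1,
      μ * u t = γ t * H u + ∫ s, k t s * (g s * F s) ∂ν := by
    intro t ht
    have h1 := hfix t ht
    rw [Tham] at h1
    rw [h1]
    congr 1
    rw [hii]
    congr 1
    funext s
    rw [hFdef]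
    ring
  have hIntEq : μ * (∫ t, u t ∂A)
      = (∫ t, γ t ∂A) * H u + ∫ s, 𝒦 s * (g s * F s) ∂ν := by
    have h1 : ∫ t, μ * u t ∂A
        = ∫ t, (γ t * H u + ∫ s, k t s * (g s * F s) ∂ν) ∂A := by
      apply integral_congr_ae
      filter_upwards [hAmem] with t ht
      exact hfix' t ht
    rw [integral_const_mul, integral_add (hγ_int.mul_const _) hinner_int,
      integral_mul_const, hswap] at h1
    have h2 : ∫ s, (∫ t, k t s * (g s * F s) ∂A) ∂ν = ∫ s, 𝒦 s * (g s * F s) ∂ν := by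
      congr 1
      funext s
      rw [integral_mul_const]
      try simp only [h𝒦def]
    rw [h2] at h1
    exact h1
  -- scalar estimates
  have hHu0 : 0 ≤ H u := hH_nonneg u huK
  have hαu_ge : H u ≤ ∫ t, u t ∂A := hHα u huK hnrm
  have hαu0 : 0 ≤ ∫ t, u t ∂A := hHu0.trans hαu_ge
  have hαγ1 : 0 < 1 - (∫ t, γ t ∂A) := by linarith
  have hX1 : (1 - (∫ t, γ t ∂A)) * H u ≤ ∫ s, 𝒦 s * (g s * F s) ∂ν := by
    nlinarith [mul_nonneg (sub_nonneg.2 hμ) hαu0]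
  have hX2 : ∫ s, 𝒦 s * (g s * F s) ∂ν ≤ (fb * ρ) * ∫ s, 𝒦 s * g s ∂ν := by
    have h1 : ∫ s, 𝒦 s * (g s * F s) ∂ν ≤ ∫ s, 𝒦 s * g s * (fb * ρ) ∂ν := by
      apply integral_mono_ae h𝒦gF_int (h𝒦g_int.mul_const _)
      filter_upwards [h𝒦props, hg_nonneg, hFb] with s hs h2 h3
      nlinarith [mul_le_mul_of_nonneg_left h3 (mul_nonneg hs.1 h2)]
    rwa [integral_mul_const, mul_comm] at h1
  have h𝒦g0 : 0 ≤ ∫ s, 𝒦 s * g s ∂ν := by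
    apply integral_nonneg_of_ae
    filter_upwards [h𝒦props, hg_nonneg] with s hs h2
    exact mul_nonneg hs.1 h2
  have hHb : H u ≤ fb * ρ * ((∫ s, 𝒦 s * g s ∂ν) / (1 - ∫ t, γ t ∂A)) := by
    have h5 : H u * (1 - ∫ t, γ t ∂A) ≤ fb * ρ * ∫ s, 𝒦 s * g s ∂ν := by
      nlinarith [hX1.trans hX2]
    have h6 := (le_div_iff₀ hαγ1).2 h5
    rw [mul_div_assoc] at h6
    exact h6
  -- the sup
  have hΨconv : ∀ t : ℝ, |γ t| / (1 - ∫ t', γ t' ∂A) *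
      (∫ s in (0:ℝ)..1, (∫ t', k t' s ∂A) * g s) + ∫ s in (0:ℝ)..1, |k t s| * g s
      = |γ t| / (1 - ∫ t', γ t' ∂A) * (∫ s, 𝒦 s * g s ∂ν)
        + ∫ s, |k t s| * g s ∂ν := by
    intro t
    rw [hii, hii]
    try simp only [h𝒦def]
  have hbdd : BddAbove ((fun t => |γ t| / (1 - ∫ t', γ t' ∂A) *
      (∫ s in (0:ℝ)..1, (∫ t', k t' s ∂A) * g s) +
      ∫ s in (0:ℝ)..1, |k t s| * g s) '' Icc (0:ℝ) 1) := by
    refine ⟨Mγ / (1 - ∫ t, γ t ∂A) * (∫ s, 𝒦 s * g s ∂ν) + ∫ s, g s * Φ s ∂ν, ?_⟩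
    rintro x ⟨t, ht, rfl⟩
    beta_reduce
    rw [hΨconv t]
    have t2 : ∫ s, |k t s| * g s ∂ν ≤ ∫ s, g s * Φ s ∂ν := by
      apply integral_mono_ae (hkg_int t ht) hgΦν
      filter_upwards [hkΦ_abs t ht, hg_nonneg] with s h1 h2
      calc |k t s| * g s ≤ Φ s * g s := mul_le_mul_of_nonneg_right h1 h2
      _ = g s * Φ s := mul_comm _ _
    have t3 : |γ t| ≤ Mγ := by
      have := hMγ t ht
      rwa [Real.norm_eq_abs] at this
    have t4 : |γ t| / (1 - ∫ t', γ t' ∂A) * (∫ s, 𝒦 s * g s ∂ν)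
        ≤ Mγ / (1 - ∫ t, γ t ∂A) * (∫ s, 𝒦 s * g s ∂ν) := by
      exact mul_le_mul_of_nonneg_right ((div_le_div_iff_of_pos_right hαγ1).2 t3) h𝒦g0
    linarith
  -- pointwise final bound
  have hfinal : ∀ t ∈ Icc (0:ℝ) 1, |u t| ≤ fb * ρ * sSup ((fun t => |γ t| / (1 - ∫ t', γ t' ∂A) *
      (∫ s in (0:ℝ)..1, (∫ t', k t' s ∂A) * g s) +
      ∫ s in (0:ℝ)..1, |k t s| * g s) '' Icc (0:ℝ) 1) := by
    intro t ht
    have heq := hfix' t ht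
    have hI1' : |∫ s, k t s * (g s * F s) ∂ν| ≤ (∫ s, |k t s| * g s ∂ν) * (fb * ρ) := by
      have hs1 : |∫ s, k t s * (g s * F s) ∂ν| ≤ ∫ s, |k t s * (g s * F s)| ∂ν := by
        have := norm_integral_le_integral_norm (μ := ν) (fun s => k t s * (g s * F s))
        simp only [Real.norm_eq_abs] at this
        exact this
      have hs2 : ∫ s, |k t s * (g s * F s)| ∂ν ≤ ∫ s, |k t s| * g s * (fb * ρ) ∂ν := by
        apply integral_mono_ae (hkgF_int t ht).abs ((hkg_int t ht).mul_const _)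
        filter_upwards [hg_nonneg, hFb] with s h2 h3
        have h4 := hF_nn s
        have h5 : |k t s * (g s * F s)| = |k t s| * (g s * F s) := by
          rw [abs_mul, abs_of_nonneg (mul_nonneg h2 h4)]
        rw [h5]
        nlinarith [mul_le_mul_of_nonneg_left h3 (mul_nonneg (abs_nonneg (k t s)) h2)]
      rw [integral_mul_const] at hs2
      linarith
    have hterm1 : |γ t| * H u
        ≤ fb * ρ * (|γ t| / (1 - ∫ t', γ t' ∂A) * (∫ s, 𝒦 s * g s ∂ν)) := by
      have h6 := mul_le_mul_of_nonneg_left hHb (abs_nonneg (γ t))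
      calc |γ t| * H u ≤ |γ t| * (fb * ρ * ((∫ s, 𝒦 s * g s ∂ν) / (1 - ∫ t, γ t ∂A))) := h6
      _ = fb * ρ * (|γ t| / (1 - ∫ t', γ t' ∂A) * (∫ s, 𝒦 s * g s ∂ν)) := by ring
    have hμut : |μ * u t| = μ * |u t| := by
      rw [abs_mul, abs_of_pos (lt_of_lt_of_le one_pos hμ)]
    have habs : μ * |u t| ≤ fb * ρ * (|γ t| / (1 - ∫ t', γ t' ∂A) * (∫ s, 𝒦 s * g s ∂ν)
        + ∫ s, |k t s| * g s ∂ν) := by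
      rw [← hμut, heq]
      calc |γ t * H u + ∫ s, k t s * (g s * F s) ∂ν|
          ≤ |γ t * H u| + |∫ s, k t s * (g s * F s) ∂ν| := abs_add_le _ _
      _ ≤ |γ t| * H u + (∫ s, |k t s| * g s ∂ν) * (fb * ρ) := by
          rw [abs_mul, abs_of_nonneg hHu0]
          linarith
      _ ≤ _ := by nlinarith [hterm1]
    have hΨle : |γ t| / (1 - ∫ t', γ t' ∂A) * (∫ s, 𝒦 s * g s ∂ν)
        + ∫ s, |k t s| * g s ∂ν ≤ sSup ((fun t => |γ t| / (1 - ∫ t', γ t' ∂A) *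
          (∫ s in (0:ℝ)..1, (∫ t', k t' s ∂A) * g s) +
          ∫ s in (0:ℝ)..1, |k t s| * g s) '' Icc (0:ℝ) 1) := by
      rw [← hΨconv t]
      exact le_csSup hbdd (mem_image_of_mem _ ht)
    have h7 := habs.trans (mul_le_mul_of_nonneg_left hΨle (by positivity))
    nlinarith [abs_nonneg (u t)]
  have hρle : ρ ≤ fb * ρ * sSup ((fun t => |γ t| / (1 - ∫ t', γ t' ∂A) *
      (∫ s in (0:ℝ)..1, (∫ t', k t' s ∂A) * g s) +
      ∫ s in (0:ℝ)..1, |k t s| * g s) '' Icc (0:ℝ) 1) := by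
    have h9 : ρ = sSup ((fun t => |u t|) '' Icc (0:ℝ) 1) := hnrm.symm
    conv_lhs => rw [h9]
    apply csSup_le himg_ne
    rintro x ⟨t, ht, rfl⟩
    exact hfinal t ht
  nlinarith [hmain, hρ, hρle]
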